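/- For every integer k ≥ 2 and every real δ ∈ (0,1) there exist a natural number n₀ = n₀(k,δ) and a real constant C = C(k,δ) > 0 with the following property. Let n ≥ n₀, let 1 ≤ t₁ < t₂ < … < t_k be real numbers such that for all indices 1 ≤ ℓ₁ ≤ ℓ₂ < ℓ₃ ≤ k one has t_{ℓ₃} ∉ [(1−δ)(t_{ℓ₁}+t_{ℓ₂}), t_{ℓ₁}+t_{ℓ₂}+2], and let P ⊂ ℝ² be a separated set with |P| = n. Then the number of unordered pairs {p,q} of distinct points of P whose Euclidean distance lies in ⋃_{ℓ=1}^k [t_ℓ, t_ℓ+1] is at most n²/4 + C·n. -/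

import Mathlib

local notation "Pt" => EuclideanSpace ℝ (Fin 2)



lemma dist_sq (x y : Pt) : dist x y ^ 2 = (x 0 - y 0)^2 + (x 1 - y 1)^2 := by
  rw [EuclideanSpace.dist_eq, Real.sq_sqrt (by positivity)]
  rw [Fin.sum_univ_two]
  simp [Real.dist_eq, sq_abs]

lemma coord_le_dist (x y : Pt) (i : Fin 2) : |x i - y i| ≤ dist x y := by
  have h := dist_sq x y
  have s0 := sq_nonneg (x 0 - y 0)
  have s1 := sq_nonneg (x 1 - y 1)
  have h2 : (x i - y i)^2 ≤ dist x y ^ 2 := by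
    fin_cases i
    · change (x 0 - y 0)^2 ≤ _; linarith
    · change (x 1 - y 1)^2 ≤ _; linarith
  calc |x i - y i| = Real.sqrt ((x i - y i)^2) := (Real.sqrt_sq_eq_abs _).symm
    _ ≤ Real.sqrt (dist x y ^ 2) := Real.sqrt_le_sqrt h2
    _ = dist x y := by rw [Real.sqrt_sq dist_nonneg]

lemma floor_eq_abs_lt {a b : ℝ} (h : ⌊a⌋ = ⌊b⌋) : |a - b| < 1 := by
  have h1 := Int.lt_floor_add_one a
  have h2 := Int.floor_le a
  have h3 := Int.lt_floor_add_one b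
  have h4 := Int.floor_le b
  rw [h] at h1 h2
  rw [abs_lt]; constructor <;> push_cast at * <;> linarith

/-- Pigeonhole: a 1-separated set confined (via coordinates `g₁, g₂`) to a `W × H`
window has at most `(4W+2)(4H+2)` elements. -/
lemma cell_count (V : Finset Pt) (g₁ g₂ : Pt → ℝ) (W H : ℝ) (hW : 0 ≤ W) (hH : 0 ≤ H)
    (hsep : ∀ v ∈ V, ∀ v' ∈ V, v ≠ v' → 1 ≤ dist v v')
    (hd : ∀ v ∈ V, ∀ v' ∈ V, dist v v' ^ 2 ≤ (g₁ v - g₁ v')^2 + (g₂ v - g₂ v')^2)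
    (h₁ : ∀ v ∈ V, ∀ v' ∈ V, |g₁ v - g₁ v'| ≤ W)
    (h₂ : ∀ v ∈ V, ∀ v' ∈ V, |g₂ v - g₂ v'| ≤ H) :
    (V.card : ℝ) ≤ (4*W+2)*(4*H+2) := by
  rcases V.eq_empty_or_nonempty with rfl | ⟨v₀, hv₀⟩
  · simp; positivity
  set f : Pt → ℤ × ℤ := fun v => (⌊2 * g₁ v⌋, ⌊2 * g₂ v⌋) with hf
  set T : Finset (ℤ × ℤ) :=
    Finset.Icc ⌊2*g₁ v₀ - 2*W⌋ ⌊2*g₁ v₀ + 2*W⌋ ×ˢ Finset.Icc ⌊2*g₂ v₀ - 2*H⌋ ⌊2*g₂ v₀ + 2*H⌋ with hT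
  have hmaps : ∀ v ∈ V, f v ∈ T := by
    intro v hv
    have e1 := h₁ v hv v₀ hv₀
    have e2 := h₂ v hv v₀ hv₀
    rw [abs_le] at e1 e2
    simp only [hT, Finset.mem_product, Finset.mem_Icc, hf]
    constructor <;> constructor <;> apply Int.floor_le_floor <;> linarith
  have hinj : Set.InjOn f ↑V := by
    intro v hv v' hv' hfe
    by_contra hne
    simp only [Finset.mem_coe] at hv hv'
    have hs := hsep v hv v' hv' hne
    have hd' := hd v hv v' hv'
    simp only [hf, Prod.mk.injEq] at hfe
    have a1 : |2 * g₁ v - 2 * g₁ v'| < 1 := floor_eq_abs_lt hfe.1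
    have a2 : |2 * g₂ v - 2 * g₂ v'| < 1 := floor_eq_abs_lt hfe.2
    rw [abs_lt] at a1 a2
    nlinarith [sq_nonneg (dist v v')]
  have hcard : V.card ≤ T.card := Finset.card_le_card_of_injOn f hmaps hinj
  have hTcard : (T.card : ℝ) ≤ (4*W+2)*(4*H+2) := by
    rw [hT, Finset.card_product]
    have key : ∀ (x c : ℝ), 0 ≤ c → ((Finset.Icc ⌊x - c⌋ ⌊x + c⌋).card : ℝ) ≤ 2*c + 2 := by
      intro x c hc
      rw [Int.card_Icc]
      have h1 : (⌊x + c⌋ : ℝ) ≤ x + c := Int.floor_le _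
      have h2 : x - c - 1 < (⌊x - c⌋ : ℝ) := by linarith [Int.lt_floor_add_one (x - c)]
      rw [show ((⌊x + c⌋ + 1 - ⌊x - c⌋).toNat : ℝ) = (((⌊x + c⌋ + 1 - ⌊x - c⌋).toNat : ℤ) : ℝ) by
        norm_cast]
      rw [Int.toNat_eq_max]
      rw [Int.cast_max]
      apply max_le _ (by norm_num; linarith)
      push_cast
      linarith
    have k1 := key (2*g₁ v₀) (2*W) (by linarith)
    have k2 := key (2*g₂ v₀) (2*H) (by linarith)
    push_cast
    have c1 : (0:ℝ) ≤ ((Finset.Icc ⌊2*g₁ v₀ - 2*W⌋ ⌊2*g₁ v₀ + 2*W⌋).card : ℝ) := by positivity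
    have c2 : (0:ℝ) ≤ ((Finset.Icc ⌊2*g₂ v₀ - 2*H⌋ ⌊2*g₂ v₀ + 2*H⌋).card : ℝ) := by positivity
    calc ((Finset.Icc ⌊2*g₁ v₀ - 2*W⌋ ⌊2*g₁ v₀ + 2*W⌋).card : ℝ)
          * ((Finset.Icc ⌊2*g₂ v₀ - 2*H⌋ ⌊2*g₂ v₀ + 2*H⌋).card : ℝ)
        ≤ (2*(2*W) + 2) * (2*(2*H) + 2) := by
          apply mul_le_mul k1 k2 c2 (by linarith)
      _ = (4*W+2)*(4*H+2) := by ring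
  calc (V.card : ℝ) ≤ (T.card : ℝ) := by exact_mod_cast hcard
    _ ≤ _ := hTcard

/-- A 1-separated set in a ball of radius `ρ` has at most `(8ρ+2)²` points. -/
lemma ball_count (u : Pt) (ρ : ℝ) (hρ : 0 ≤ ρ) (V : Finset Pt)
    (hsep : ∀ v ∈ V, ∀ v' ∈ V, v ≠ v' → 1 ≤ dist v v')
    (hv : ∀ v ∈ V, dist u v ≤ ρ) :
    (V.card : ℝ) ≤ (8*ρ+2)^2 := by
  have key : ∀ (i : Fin 2), ∀ v ∈ V, ∀ v' ∈ V, |v i - v' i| ≤ 2*ρ := by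
    intro i v hv1 v' hv2
    calc |v i - v' i| ≤ dist v v' := coord_le_dist v v' i
      _ ≤ dist v u + dist u v' := dist_triangle v u v'
      _ ≤ 2*ρ := by rw [dist_comm v u]; linarith [hv v hv1, hv v' hv2]
  have := cell_count V (fun v => v 0) (fun v => v 1) (2*ρ) (2*ρ) (by linarith) (by linarith)
    hsep (fun v hv1 v' hv2 => le_of_eq (dist_sq v v')) (key 0) (key 1)
  calc (V.card : ℝ) ≤ (4*(2*ρ)+2)*(4*(2*ρ)+2) := this
    _ = (8*ρ+2)^2 := by ring



noncomputable def Ngeom (δ : ℝ) : ℝ := 52*(672/Real.sqrt δ + 2) + 676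

lemma Ngeom_nonneg (δ : ℝ) (hδ : 0 < δ) : 0 ≤ Ngeom δ := by
  have : 0 < Real.sqrt δ := Real.sqrt_pos.mpr hδ
  unfold Ngeom; positivity

/- arithmetic helpers (kept at top level so that `nlinarith` works in a small context) -/

lemma sqdiff_le {r p p' : ℝ} (hr : 0 ≤ r) (h1 : r ≤ p) (h2 : p ≤ r+1) (h3 : r ≤ p')
    (h4 : p' ≤ r+1) : |p^2 - p'^2| ≤ 2*r+2 := by
  rw [abs_le]; constructor <;> nlinarith

lemma spread1 {d R X A B : ℝ} (hR2 : 2 < R) (hdR : R/2 ≤ d) (hA : |A| ≤ 2*R+2)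
    (hB : |B| ≤ 2*R+2) (hkey : 2*d*X = A + B) : |X| ≤ 6 := by
  have h1 : |2*d*X| ≤ 4*R+4 := by
    rw [hkey]
    calc |A+B| ≤ |A|+|B| := abs_add_le _ _
      _ ≤ 4*R+4 := by linarith
  have h2 : 2*d*|X| ≤ 4*R+4 := by
    rwa [abs_mul, abs_of_pos (by linarith : (0:ℝ) < 2*d)] at h1
  have h3 : R*|X| ≤ 4*R+4 :=
    le_trans (mul_le_mul_of_nonneg_right (by linarith) (abs_nonneg X)) h2
  nlinarith [abs_nonneg X]

lemma abs_le_of_sq {x c : ℝ} (hc : 0 ≤ c) (h : x^2 ≤ c^2) : |x| ≤ c := by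
  rw [abs_le]; constructor <;> nlinarith

lemma heron_low {δ r R d p q g : ℝ} (hδ0 : 0 < δ) (hr : 1 ≤ r) (hrR : r ≤ R) (hR2 : 2 < R)
    (hdpos : 0 < d) (hd3R : d ≤ 3*R)
    (hfac : 4*d^2*g^2 = (p+q+d)*(p+q-d)*(p+d-q)*(q+d-p))
    (F1 : R ≤ p+q+d) (F2 : δ/2*r ≤ p+q-d) (F3 : r/2 ≤ p+d-q) (F4 : R ≤ q+d-p) :
    δ*r^2/144 ≤ g^2 := by
  have hpos2 : (0:ℝ) < δ/2*r := by positivity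
  have hpos3 : (0:ℝ) < r/2 := by positivity
  have hposR : (0:ℝ) < R := by linarith
  have m1 : R*(δ/2*r) ≤ (p+q+d)*(p+q-d) := mul_le_mul F1 F2 hpos2.le (by linarith)
  have m2 : (R*(δ/2*r))*(r/2) ≤ ((p+q+d)*(p+q-d))*(p+d-q) :=
    mul_le_mul m1 F3 hpos3.le (le_trans (by positivity) m1)
  have m3 : ((R*(δ/2*r))*(r/2))*R ≤ (((p+q+d)*(p+q-d))*(p+d-q))*(q+d-p) :=
    mul_le_mul m2 F4 hposR.le (le_trans (by positivity) m2)
  have hK : δ*r^2*R^2/4 ≤ 4*d^2*g^2 := by rw [hfac]; nlinarith [m3]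
  have hd36 : 4*d^2 ≤ 36*R^2 := by nlinarith
  have hstep : δ*r^2*R^2/4 ≤ 36*R^2*g^2 := by
    have := mul_le_mul_of_nonneg_right hd36 (sq_nonneg g)
    nlinarith [hK]
  rw [show δ*r^2/144 = (δ*r^2*R^2/4)/(36*R^2) by field_simp; ring]
  rw [div_le_iff₀ (by positivity : (0:ℝ) < 36*R^2)]
  nlinarith [hstep]

lemma spread2 {sδ r X S : ℝ} (hsδ : 0 < sδ) (hr : 1 ≤ r) (hX : 0 ≤ X)
    (hS : sδ*r/6 ≤ S) (hprod : X * S ≤ 28*r) : X ≤ 168/sδ := by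
  have h1 : X*(sδ*r/6) ≤ 28*r := le_trans (mul_le_mul_of_nonneg_left hS hX) hprod
  have h2 : (X*sδ)*r ≤ 168*r := by nlinarith [h1]
  have h3 : X*sδ ≤ 168 := by
    have hrpos : (0:ℝ) < r := by linarith
    exact le_of_mul_le_mul_right (by linarith [h2]) hrpos
  rw [le_div_iff₀ hsδ]
  exact h3

set_option maxHeartbeats 1000000 in
lemma annuli_count (δ : ℝ) (hδ0 : 0 < δ) (hδ1 : δ ≤ 1) (u w : Pt) (r R : ℝ)
    (hr : 1 ≤ r) (hrR : r ≤ R) (V : Finset Pt)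
    (hsep : ∀ v ∈ V, ∀ v' ∈ V, v ≠ v' → 1 ≤ dist v v')
    (hv : ∀ v ∈ V, r ≤ dist u v ∧ dist u v ≤ r + 1 ∧ R ≤ dist w v ∧ dist w v ≤ R + 1 ∧
      dist u v ≤ dist u w ∧ dist w v ≤ dist u w + 1 ∧
      δ/2 * r ≤ dist u v + dist w v - dist u w ∧ r/2 ≤ dist u v + dist u w - dist w v) :
    (V.card : ℝ) ≤ Ngeom δ := by
  have hsd : 0 < Real.sqrt δ := Real.sqrt_pos.mpr hδ0
  rcases V.eq_empty_or_nonempty with rfl | ⟨v₀, hv₀⟩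
  · simpa using Ngeom_nonneg δ hδ0
  by_cases hR2 : R ≤ 2
  · -- everything is in a small ball around u
    have hball : ∀ v ∈ V, dist u v ≤ 3 := by
      intro v hv'
      obtain ⟨_, h2, _, _, _, _, _, _⟩ := hv v hv'
      linarith only [h2, hr, hrR, hR2]
    have hb := ball_count u 3 (by norm_num) V hsep hball
    have hpos : (0:ℝ) ≤ 52*(672/Real.sqrt δ + 2) := by positivity
    norm_num at hb
    have hb' : (V.card : ℝ) ≤ 676 := by exact_mod_cast hb
    unfold Ngeom
    linarith only [hb', hpos]
  push_neg at hR2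
  set d := dist u w with hd_def
  obtain ⟨hp₀1, hp₀2, hq₀1, hq₀2, hp₀d, hq₀d, _, _⟩ := hv v₀ hv₀
  have hdr : r ≤ d := le_trans hp₀1 hp₀d
  have hd_pos : 0 < d := lt_of_lt_of_le (by linarith only [hr]) hdr
  have hdR : R/2 ≤ d := by linarith only [hq₀1, hq₀d, hR2]
  have hd3R : d ≤ 3*R := by
    have htri : d ≤ dist u v₀ + dist v₀ w := dist_triangle u v₀ w
    rw [dist_comm v₀ w] at htri
    linarith only [htri, hp₀2, hq₀2, hrR, hR2]
  have hd2 : d^2 = (w 0 - u 0)^2 + (w 1 - u 1)^2 := by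
    have h := dist_sq u w; rw [← hd_def] at h; rw [h]; ring
  obtain ⟨a, b, hwu0, hwu1, hab⟩ :
      ∃ a b : ℝ, w 0 - u 0 = d*a ∧ w 1 - u 1 = d*b ∧ a^2 + b^2 = 1 := by
    refine ⟨(w 0 - u 0)/d, (w 1 - u 1)/d, by field_simp, by field_simp, ?_⟩
    field_simp
    linarith only [hd2]
  set g₁ : Pt → ℝ := fun v => a*(v 0 - u 0) + b*(v 1 - u 1) with hg₁
  set g₂ : Pt → ℝ := fun v => b*(v 0 - u 0) - a*(v 1 - u 1) with hg₂
  have hpyth : ∀ v : Pt, g₁ v^2 + g₂ v^2 = dist u v^2 := by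
    intro v
    have e : g₁ v^2 + g₂ v^2 = (a^2+b^2)*((v 0 - u 0)^2+(v 1 - u 1)^2) := by
      simp only [hg₁, hg₂]; ring
    rw [e, hab, one_mul, dist_sq]; ring
  have hdist2 : ∀ v v' : Pt, (g₁ v - g₁ v')^2 + (g₂ v - g₂ v')^2 = dist v v'^2 := by
    intro v v'
    have e : (g₁ v - g₁ v')^2 + (g₂ v - g₂ v')^2
        = (a^2+b^2)*((v 0 - v' 0)^2+(v 1 - v' 1)^2) := by
      simp only [hg₁, hg₂]; ring
    rw [e, hab, one_mul, dist_sq]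
  have hq : ∀ v : Pt, 2*d*(g₁ v) = dist u v^2 + d^2 - dist w v^2 := by
    intro v
    have h1 : dist w v^2 = (w 0 - v 0)^2 + (w 1 - v 1)^2 := dist_sq w v
    have h2 : dist u v^2 = (u 0 - v 0)^2 + (u 1 - v 1)^2 := dist_sq u v
    have e0 : w 0 - v 0 = d*a - (v 0 - u 0) := by linarith only [hwu0]
    have e1 : w 1 - v 1 = d*b - (v 1 - u 1) := by linarith only [hwu1]
    rw [h1, h2, e0, e1]
    simp only [hg₁]
    linear_combination (d^2) * hab
  have hg1val : ∀ v : Pt, g₁ v = (dist u v^2 + d^2 - dist w v^2)/(2*d) := by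
    intro v
    have h := hq v
    field_simp
    linarith only [h]
  clear_value g₁ g₂
  have hr0 : (0:ℝ) ≤ r := by linarith only [hr]
  have hR0 : (0:ℝ) ≤ R := by linarith only [hr, hrR]
  -- spread of g₁
  have habs1 : ∀ v ∈ V, ∀ v' ∈ V, |g₁ v - g₁ v'| ≤ 6 := by
    intro v hv1 v' hv2
    obtain ⟨a1, a2, a3, a4, _, _, _, _⟩ := hv v hv1
    obtain ⟨b1, b2, b3, b4, _, _, _, _⟩ := hv v' hv2
    have key : 2*d*(g₁ v - g₁ v') =
        (dist u v^2 - dist u v'^2) + (dist w v'^2 - dist w v^2) := by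
      have k1 := hq v; have k2 := hq v'; linarith only [k1, k2]
    have hA : |dist u v^2 - dist u v'^2| ≤ 2*R+2 := by
      have := sqdiff_le hr0 a1 a2 b1 b2
      have h2 := abs_nonneg (dist u v^2 - dist u v'^2)
      linarith only [this, hrR, h2]
    have hB : |dist w v'^2 - dist w v^2| ≤ 2*R+2 := sqdiff_le hR0 b3 b4 a3 a4
    exact spread1 hR2 hdR hA hB key
  -- |g₁| bound
  have habs1' : ∀ v ∈ V, |g₁ v| ≤ r + 1 := by
    intro v hv1
    obtain ⟨a1, a2, _, _, _, _, _, _⟩ := hv v hv1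
    apply abs_le_of_sq (by linarith only [hr] : (0:ℝ) ≤ r+1)
    have h1 : g₁ v^2 ≤ dist u v^2 := by linarith only [hpyth v, sq_nonneg (g₂ v)]
    have h2 : dist u v^2 ≤ (r+1)^2 := pow_le_pow_left₀ dist_nonneg a2 2
    linarith only [h1, h2]
  -- lower bound for |g₂|
  have hlow : ∀ v ∈ V, Real.sqrt δ * r / 12 ≤ |g₂ v| := by
    intro v hv1
    obtain ⟨a1, a2, a3, a4, a5, a6, a7, a8⟩ := hv v hv1
    have hfac : 4*d^2*(g₂ v)^2 =
        (dist u v + dist w v + d)*(dist u v + dist w v - d)*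
        (dist u v + d - dist w v)*(dist w v + d - dist u v) := by
      have hsq : g₂ v^2 = dist u v^2 - (g₁ v)^2 := by linarith only [hpyth v]
      rw [hsq, hg1val v]
      field_simp
      ring
    have F1 : R ≤ dist u v + dist w v + d := by
      linarith only [a3, dist_nonneg (x := u) (y := v), hd_pos]
    have F4 : R ≤ dist w v + d - dist u v := by linarith only [a3, a5]
    have hg2sq : δ*r^2/144 ≤ (g₂ v)^2 :=
      heron_low hδ0 hr hrR hR2 hd_pos hd3R hfac F1 a7 a8 F4
    have hrhs : (Real.sqrt δ * r / 12)^2 = δ*r^2/144 := by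
      rw [div_pow, mul_pow, Real.sq_sqrt hδ0.le]; ring
    calc Real.sqrt δ * r / 12 = Real.sqrt ((Real.sqrt δ * r / 12)^2) := by
          rw [Real.sqrt_sq (by positivity)]
      _ ≤ Real.sqrt ((g₂ v)^2) := Real.sqrt_le_sqrt (by rw [hrhs]; exact hg2sq)
      _ = |g₂ v| := Real.sqrt_sq_eq_abs _
  -- spread of |g₂|
  have habs2 : ∀ v ∈ V, ∀ v' ∈ V, |(|g₂ v| - |g₂ v'|)| ≤ 168 / Real.sqrt δ := by
    intro v hv1 v' hv2
    obtain ⟨a1, a2, _, _, _, _, _, _⟩ := hv v hv1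
    obtain ⟨b1, b2, _, _, _, _, _, _⟩ := hv v' hv2
    have e : (|g₂ v| - |g₂ v'|)*(|g₂ v| + |g₂ v'|) = g₂ v^2 - g₂ v'^2 := by
      rw [← sq_abs (g₂ v), ← sq_abs (g₂ v')]; ring
    have hpp : |dist u v^2 - dist u v'^2| ≤ 2*r+2 := sqdiff_le hr0 a1 a2 b1 b2
    have hg1d : |g₁ v^2 - g₁ v'^2| ≤ (2*r+2)*6 := by
      have e2 : g₁ v^2 - g₁ v'^2 = (g₁ v + g₁ v')*(g₁ v - g₁ v') := by ring
      rw [e2, abs_mul]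
      apply mul_le_mul _ (habs1 v hv1 v' hv2) (abs_nonneg _) (by linarith only [hr])
      calc |g₁ v + g₁ v'| ≤ |g₁ v| + |g₁ v'| := abs_add_le _ _
        _ ≤ 2*r+2 := by linarith only [habs1' v hv1, habs1' v' hv2]
    have hg2d : |g₂ v^2 - g₂ v'^2| ≤ 28*r := by
      have e3 : g₂ v^2 - g₂ v'^2 = (dist u v^2 - dist u v'^2) - (g₁ v^2 - g₁ v'^2) := by
        have k1 := hpyth v; have k2 := hpyth v'; linarith only [k1, k2]
      rw [e3]
      calc |(dist u v^2 - dist u v'^2) - (g₁ v^2 - g₁ v'^2)|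
          ≤ |dist u v^2 - dist u v'^2| + |g₁ v^2 - g₁ v'^2| := abs_sub _ _
        _ ≤ (2*r+2) + (2*r+2)*6 := by linarith only [hpp, hg1d]
        _ ≤ 28*r := by linarith only [hr]
    have hsum : Real.sqrt δ * r / 6 ≤ |g₂ v| + |g₂ v'| := by
      have l1 := hlow v hv1; have l2 := hlow v' hv2; linarith only [l1, l2]
    have habs : |(|g₂ v| - |g₂ v'|)| * (|g₂ v| + |g₂ v'|) ≤ 28*r := by
      rw [← abs_of_nonneg (show (0:ℝ) ≤ |g₂ v| + |g₂ v'| by positivity), ← abs_mul, e]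
      exact hg2d
    exact spread2 hsd hr (abs_nonneg _) hsum habs
  -- split by sign of g₂ and apply the cell count twice
  classical
  set Vp := V.filter (fun v => 0 ≤ g₂ v) with hVp
  set Vm := V.filter (fun v => ¬ 0 ≤ g₂ v) with hVm
  have hsplit : Vp.card + Vm.card = V.card := Finset.card_filter_add_card_filter_not _
  have hH : (0:ℝ) ≤ 168 / Real.sqrt δ := by positivity
  have hcp : (Vp.card : ℝ) ≤ (4*6+2)*(4*(168/Real.sqrt δ)+2) := by
    apply cell_count Vp g₁ g₂ 6 (168/Real.sqrt δ) (by norm_num) hH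
    · intro v hv1 v' hv2; exact hsep v (Finset.mem_filter.mp hv1).1 v' (Finset.mem_filter.mp hv2).1
    · intro v hv1 v' hv2; exact le_of_eq (hdist2 v v').symm
    · intro v hv1 v' hv2
      exact habs1 v (Finset.mem_filter.mp hv1).1 v' (Finset.mem_filter.mp hv2).1
    · intro v hv1 v' hv2
      have s1 := (Finset.mem_filter.mp hv1).2
      have s2 := (Finset.mem_filter.mp hv2).2
      have h := habs2 v (Finset.mem_filter.mp hv1).1 v' (Finset.mem_filter.mp hv2).1
      rwa [abs_of_nonneg s1, abs_of_nonneg s2] at h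
  have hcm : (Vm.card : ℝ) ≤ (4*6+2)*(4*(168/Real.sqrt δ)+2) := by
    apply cell_count Vm g₁ g₂ 6 (168/Real.sqrt δ) (by norm_num) hH
    · intro v hv1 v' hv2; exact hsep v (Finset.mem_filter.mp hv1).1 v' (Finset.mem_filter.mp hv2).1
    · intro v hv1 v' hv2; exact le_of_eq (hdist2 v v').symm
    · intro v hv1 v' hv2
      exact habs1 v (Finset.mem_filter.mp hv1).1 v' (Finset.mem_filter.mp hv2).1
    · intro v hv1 v' hv2
      have s1 : g₂ v < 0 := lt_of_not_ge (Finset.mem_filter.mp hv1).2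
      have s2 : g₂ v' < 0 := lt_of_not_ge (Finset.mem_filter.mp hv2).2
      have h := habs2 v (Finset.mem_filter.mp hv1).1 v' (Finset.mem_filter.mp hv2).1
      rw [abs_of_neg s1, abs_of_neg s2] at h
      calc |g₂ v - g₂ v'| = |(-g₂ v) - (-g₂ v')| := by
            rw [show (-g₂ v) - (-g₂ v') = -(g₂ v - g₂ v') by ring, abs_neg]
        _ ≤ 168 / Real.sqrt δ := h
  have hVtot : (V.card : ℝ) = (Vp.card : ℝ) + (Vm.card : ℝ) := by exact_mod_cast hsplit.symm
  rw [hVtot]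
  unfold Ngeom
  have expand : (4*(6:ℝ)+2)*(4*(168/Real.sqrt δ)+2) = 26*(672/Real.sqrt δ + 2) := by ring
  rw [expand] at hcp hcm
  linarith only [hcp, hcm]



/-- The transversal annulus-intersection condition. -/
abbrev annCond (δ r R : ℝ) (u w v : Pt) : Prop :=
  r ≤ dist u v ∧ dist u v ≤ r + 1 ∧ R ≤ dist w v ∧ dist w v ≤ R + 1 ∧
  dist u v ≤ dist u w ∧ dist w v ≤ dist u w + 1 ∧
  δ/2 * r ≤ dist u v + dist w v - dist u w ∧ r/2 ≤ dist u v + dist u w - dist w v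

/-- Third vertices of triangles over the base `(u, w)` are constrained. -/
def goodPt (k : ℕ) (δ : ℝ) (t : Fin k → ℝ) (u w v : Pt) : Prop :=
  dist u v ≤ 2/δ + 3 ∨ ∃ i j : Fin k, t i ≤ t j ∧ annCond δ (t i) (t j) u w v

noncomputable def Btot (k : ℕ) (δ : ℝ) : ℝ := (8*(2/δ+3)+2)^2 + k^2 * Ngeom δ

lemma Btot_nonneg (k : ℕ) (δ : ℝ) (hδ : 0 < δ) : 0 ≤ Btot k δ := by
  have h1 := Ngeom_nonneg δ hδ
  unfold Btot
  positivity

/-- Per edge, the number of "good" third vertices is bounded by a constant. -/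
lemma good_count (k : ℕ) (δ : ℝ) (hδ0 : 0 < δ) (hδ1 : δ ≤ 1) (t : Fin k → ℝ)
    (ht1 : ∀ i, 1 ≤ t i) (P : Finset Pt)
    (hsep : ∀ p ∈ P, ∀ q ∈ P, p ≠ q → 1 ≤ dist p q) (u w : Pt)
    [DecidablePred fun v => goodPt k δ t u w v] :
    (((P.filter (fun v => goodPt k δ t u w v)).card : ℝ)) ≤ Btot k δ := by
  classical
  set Sm := P.filter (fun v => dist u v ≤ 2/δ + 3) with hSm
  set BU := (Finset.univ : Finset (Fin k × Fin k)).biUnion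
      (fun ij => P.filter (fun v => t ij.1 ≤ t ij.2 ∧ annCond δ (t ij.1) (t ij.2) u w v)) with hBU
  have hsub : P.filter (fun v => goodPt k δ t u w v) ⊆ Sm ∪ BU := by
    intro v hv
    obtain ⟨hvP, hgood⟩ := Finset.mem_filter.mp hv
    rcases hgood with hsmall | ⟨i, j, hij, hcond⟩
    · exact Finset.mem_union_left _ (Finset.mem_filter.mpr ⟨hvP, hsmall⟩)
    · refine Finset.mem_union_right _ (Finset.mem_biUnion.mpr ⟨(i,j), Finset.mem_univ _, ?_⟩)
      exact Finset.mem_filter.mpr ⟨hvP, hij, hcond⟩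
  have hSmc : (Sm.card : ℝ) ≤ (8*(2/δ+3)+2)^2 := by
    apply ball_count u (2/δ+3) (by positivity) Sm
    · intro x hx y hy hxy
      exact hsep x (Finset.mem_filter.mp hx).1 y (Finset.mem_filter.mp hy).1 hxy
    · intro x hx; exact (Finset.mem_filter.mp hx).2
  have hBUc : (BU.card : ℝ) ≤ k^2 * Ngeom δ := by
    have h1 : BU.card ≤ ∑ ij : Fin k × Fin k,
        (P.filter (fun v => t ij.1 ≤ t ij.2 ∧ annCond δ (t ij.1) (t ij.2) u w v)).card :=
      Finset.card_biUnion_le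
    have h2 : ∀ ij : Fin k × Fin k,
        ((P.filter (fun v => t ij.1 ≤ t ij.2 ∧ annCond δ (t ij.1) (t ij.2) u w v)).card : ℝ)
          ≤ Ngeom δ := by
      intro ij
      set V := P.filter (fun v => t ij.1 ≤ t ij.2 ∧ annCond δ (t ij.1) (t ij.2) u w v) with hV
      rcases V.eq_empty_or_nonempty with he | ⟨v₀, hv₀⟩
      · rw [he]; simpa using Ngeom_nonneg δ hδ0
      · have hij : t ij.1 ≤ t ij.2 := (Finset.mem_filter.mp hv₀).2.1
        apply annuli_count δ hδ0 hδ1 u w (t ij.1) (t ij.2) (ht1 _) hij V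
        · intro x hx y hy hxy
          exact hsep x (Finset.mem_filter.mp hx).1 y (Finset.mem_filter.mp hy).1 hxy
        · intro x hx; exact (Finset.mem_filter.mp hx).2.2
    calc (BU.card : ℝ) ≤ ∑ ij : Fin k × Fin k,
          ((P.filter (fun v => t ij.1 ≤ t ij.2 ∧ annCond δ (t ij.1) (t ij.2) u w v)).card : ℝ) := by
          exact_mod_cast h1
      _ ≤ ∑ _ij : Fin k × Fin k, Ngeom δ := Finset.sum_le_sum (fun ij _ => h2 ij)
      _ = (k^2 : ℝ) * Ngeom δ := by
          rw [Finset.sum_const, Finset.card_univ, Fintype.card_prod, Fintype.card_fin,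
            nsmul_eq_mul]
          push_cast
          ring
  calc ((P.filter (fun v => goodPt k δ t u w v)).card : ℝ)
      ≤ ((Sm ∪ BU).card : ℝ) := by exact_mod_cast Finset.card_le_card hsub
    _ ≤ (Sm.card : ℝ) + (BU.card : ℝ) := by exact_mod_cast Finset.card_union_le _ _
    _ ≤ (8*(2/δ+3)+2)^2 + k^2 * Ngeom δ := by linarith
    _ = Btot k δ := rfl

lemma typeB_helper {δ ti : ℝ} (hδ1 : δ ≤ 1) (hδ0 : 0 < δ) (h2 : 2 ≤ ti) : δ/2*ti ≤ ti - 1 := by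
  nlinarith

lemma typeA_helper {δ ti tj tl p q d : ℝ} (hδ0 : 0 < δ) (hδ1 : δ < 1)
    (e1 : ti + tj ≤ p + q) (hl2 : d ≤ tl + 1) (hlo : tl < (1-δ)*(ti+tj))
    (hδpq : 2 ≤ δ*(p+q)) : δ/2*(p+q) ≤ p+q-d := by
  nlinarith [mul_le_mul_of_nonneg_left e1 (by linarith : (0:ℝ) ≤ 1-δ)]

/-- Every triangle with all sides in the union of intervals, whose sides are sorted,
has a good vertex labelling. -/
lemma good_of_sorted (k : ℕ) (δ : ℝ) (hδ0 : 0 < δ) (hδ1 : δ < 1) (t : Fin k → ℝ)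
    (ht1 : ∀ i, 1 ≤ t i) (htmono : StrictMono t)
    (htsep : ∀ l₁ l₂ l₃ : Fin k, l₁ ≤ l₂ → l₂ < l₃ →
        t l₃ ∉ Set.Icc ((1 - δ) * (t l₁ + t l₂)) (t l₁ + t l₂ + 2))
    (u w v : Pt)
    (m1 : dist u v ∈ ⋃ l, Set.Icc (t l) (t l + 1))
    (m2 : dist w v ∈ ⋃ l, Set.Icc (t l) (t l + 1))
    (m3 : dist u w ∈ ⋃ l, Set.Icc (t l) (t l + 1))
    (h1 : dist u v ≤ dist w v) (h2 : dist w v ≤ dist u w) :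
    goodPt k δ t u w v := by
  obtain ⟨i, hi⟩ := Set.mem_iUnion.mp m1
  obtain ⟨j₀, hj₀⟩ := Set.mem_iUnion.mp m2
  obtain ⟨l₀, hl₀⟩ := Set.mem_iUnion.mp m3
  rw [Set.mem_Icc] at hi hj₀ hl₀
  -- upgrade the label of the middle side
  obtain ⟨j, hij, hj1, hj2⟩ : ∃ j : Fin k, i ≤ j ∧ t j ≤ dist w v ∧ dist w v ≤ t j + 1 := by
    rcases le_total i j₀ with h | h
    · exact ⟨j₀, h, hj₀.1, hj₀.2⟩
    · refine ⟨i, le_refl i, le_trans hi.1 h1, ?_⟩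
      have := htmono.monotone h
      linarith [hj₀.2]
  -- upgrade the label of the longest side
  obtain ⟨l, hjl, hl1, hl2⟩ : ∃ l : Fin k, j ≤ l ∧ t l ≤ dist u w ∧ dist u w ≤ t l + 1 := by
    rcases le_total j l₀ with h | h
    · exact ⟨l₀, h, hl₀.1, hl₀.2⟩
    · refine ⟨j, le_refl j, le_trans hj1 h2, ?_⟩
      have := htmono.monotone h
      linarith [hl₀.2]
  rcases eq_or_lt_of_le hjl with heq | hlt
  · -- type B : the two longest sides share the interval [t j, t j + 1]
    subst heq
    by_cases hsm : t i < 2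
    · left
      have : (0:ℝ) < 2/δ := by positivity
      linarith [hi.2]
    · push_neg at hsm
      right
      refine ⟨i, j, htmono.monotone hij, hi.1, hi.2, hj1, hj2, le_trans h1 h2, by linarith, ?_, ?_⟩
      · have hB := typeB_helper hδ1.le hδ0 hsm
        linarith [hi.1, hj1, hl2]
      · have hB := typeB_helper hδ1.le hδ0 hsm
        linarith [hi.1, hj2, hl1]
  · -- type A : distinct label for the longest side, use the separation hypothesis
    have hnotin := htsep i j l hij hlt
    rw [Set.mem_Icc] at hnotin
    push_neg at hnotin
    have htri : dist u w ≤ dist u v + dist v w := dist_triangle u v w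
    rw [dist_comm v w] at htri
    have hup : t l ≤ t i + t j + 2 := by linarith [hl1, hi.2, hj2]
    have hlo : t l < (1-δ)*(t i + t j) := by
      by_contra hcon
      push_neg at hcon
      exact absurd hup (not_le.mpr (hnotin hcon))
    by_cases hsm : dist u v + dist w v < 2/δ
    · left
      linarith [dist_nonneg (x := w) (y := v)]
    · push_neg at hsm
      right
      have hδpq : 2 ≤ δ*(dist u v + dist w v) := by
        rw [div_le_iff₀ hδ0] at hsm
        linarith
      have e1 : t i + t j ≤ dist u v + dist w v := by linarith [hi.1, hj1]
      have key := typeA_helper hδ0 hδ1 e1 hl2 hlo hδpq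
      refine ⟨i, j, htmono.monotone hij, hi.1, hi.2, hj1, hj2, le_trans h1 h2, by linarith, ?_, ?_⟩
      · have : δ/2 * t i ≤ δ/2 * (dist u v + dist w v) := by
          apply mul_le_mul_of_nonneg_left _ (by positivity)
          linarith [hi.1, dist_nonneg (x := w) (y := v)]
        linarith
      · linarith [hi.1]

/-- Any triangle with pairwise distances in the union of intervals can be relabelled
so that the third vertex is good for the ordered base pair. -/
lemma classify [DecidableEq (EuclideanSpace ℝ (Fin 2))]
    (k : ℕ) (δ : ℝ) (hδ0 : 0 < δ) (hδ1 : δ < 1) (t : Fin k → ℝ)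
    (ht1 : ∀ i, 1 ≤ t i) (htmono : StrictMono t)
    (htsep : ∀ l₁ l₂ l₃ : Fin k, l₁ ≤ l₂ → l₂ < l₃ →
        t l₃ ∉ Set.Icc ((1 - δ) * (t l₁ + t l₂)) (t l₁ + t l₂ + 2))
    (a b c : Pt) (hab : a ≠ b) (hac : a ≠ c) (hbc : b ≠ c)
    (mab : dist a b ∈ ⋃ l, Set.Icc (t l) (t l + 1))
    (mac : dist a c ∈ ⋃ l, Set.Icc (t l) (t l + 1))
    (mbc : dist b c ∈ ⋃ l, Set.Icc (t l) (t l + 1)) :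
    ∃ u w v : Pt, goodPt k δ t u w v ∧ u ≠ w ∧
      dist u w ∈ (⋃ l, Set.Icc (t l) (t l + 1)) ∧
      ({u, w, v} : Finset Pt) = {a, b, c} := by
  classical
  have mba : dist b a ∈ ⋃ l, Set.Icc (t l) (t l + 1) := by rwa [dist_comm]
  have mca : dist c a ∈ ⋃ l, Set.Icc (t l) (t l + 1) := by rwa [dist_comm]
  have mcb : dist c b ∈ ⋃ l, Set.Icc (t l) (t l + 1) := by rwa [dist_comm]
  have setbca : ({b, c, a} : Finset Pt) = {a, b, c} := by
    ext x; simp only [Finset.mem_insert, Finset.mem_singleton]; tauto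
  have setacb : ({a, c, b} : Finset Pt) = {a, b, c} := by
    ext x; simp only [Finset.mem_insert, Finset.mem_singleton]; tauto
  have setcab : ({c, a, b} : Finset Pt) = {a, b, c} := by
    ext x; simp only [Finset.mem_insert, Finset.mem_singleton]; tauto
  have setcba : ({c, b, a} : Finset Pt) = {a, b, c} := by
    ext x; simp only [Finset.mem_insert, Finset.mem_singleton]; tauto
  have setbac : ({b, a, c} : Finset Pt) = {a, b, c} := by
    ext x; simp only [Finset.mem_insert, Finset.mem_singleton]; tauto
  rcases le_total (dist a b) (dist a c) with h1 | h1
  · rcases le_total (dist a c) (dist b c) with h2 | h2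
    · -- max is bc ; (u,w,v) = (b,c,a)
      refine ⟨b, c, a, good_of_sorted k δ hδ0 hδ1 t ht1 htmono htsep b c a mba mca mbc
        (by rw [dist_comm b a, dist_comm c a]; exact h1)
        (by rw [dist_comm c a]; exact h2), hbc, mbc, setbca⟩
    · rcases le_total (dist a b) (dist b c) with h3 | h3
      · -- max is ac ; (u,w,v) = (a,c,b)
        refine ⟨a, c, b, good_of_sorted k δ hδ0 hδ1 t ht1 htmono htsep a c b mab mcb mac
          (by rw [dist_comm c b]; exact h3)
          (by rw [dist_comm c b]; exact h2), hac, mac, setacb⟩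
      · -- max is ac ; (u,w,v) = (c,a,b)
        refine ⟨c, a, b, good_of_sorted k δ hδ0 hδ1 t ht1 htmono htsep c a b mcb mab mca
          (by rw [dist_comm c b]; exact h3)
          (by rw [dist_comm c a]; exact h1), hac.symm, mca, setcab⟩
  · rcases le_total (dist a b) (dist b c) with h2 | h2
    · -- max is bc ; (u,w,v) = (c,b,a)
      refine ⟨c, b, a, good_of_sorted k δ hδ0 hδ1 t ht1 htmono htsep c b a mca mba mcb
        (by rw [dist_comm c a, dist_comm b a]; exact h1)
        (by rw [dist_comm b a, dist_comm c b]; exact h2), hbc.symm, mcb, setcba⟩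
    · rcases le_total (dist a c) (dist b c) with h3 | h3
      · -- max is ab ; (u,w,v) = (a,b,c)
        refine ⟨a, b, c, good_of_sorted k δ hδ0 hδ1 t ht1 htmono htsep a b c mac mbc mab
          h3 h2, hab, mab, rfl⟩
      · -- max is ab ; (u,w,v) = (b,a,c)
        refine ⟨b, a, c, good_of_sorted k δ hδ0 hδ1 t ht1 htmono htsep b a c mbc mac mba
          h3 (by rw [dist_comm b a]; exact h1), hab.symm, mba, setbac⟩



/-- The number of unordered pairs `{p, q}` of distinct points of the finite set `P ⊂ ℝ²`
whose Euclidean distance lies in the set `S ⊆ ℝ`. -/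
noncomputable def nearPairs (P : Finset (EuclideanSpace ℝ (Fin 2))) (S : Set ℝ) : ℕ :=
  Set.ncard {e : Sym2 (EuclideanSpace ℝ (Fin 2)) |
    ¬ e.IsDiag ∧ (∀ p ∈ e, p ∈ P) ∧
      Sym2.lift ⟨fun p q => dist p q, fun _ _ => dist_comm _ _⟩ e ∈ S}

set_option maxHeartbeats 2000000 in
theorem nearly_equal_distances_plane (k : ℕ) (hk : 2 ≤ k) (δ : ℝ) (hδ : δ ∈ Set.Ioo (0:ℝ) 1) :
    ∃ (n₀ : ℕ) (C : ℝ), 0 < C ∧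
      ∀ (n : ℕ), n₀ ≤ n →
      ∀ (t : Fin k → ℝ), 1 ≤ t ⟨0, by omega⟩ → StrictMono t →
      (∀ l₁ l₂ l₃ : Fin k, l₁ ≤ l₂ → l₂ < l₃ →
        t l₃ ∉ Set.Icc ((1 - δ) * (t l₁ + t l₂)) (t l₁ + t l₂ + 2)) →
      ∀ (P : Finset (EuclideanSpace ℝ (Fin 2))), P.card = n →
        (∀ p ∈ P, ∀ q ∈ P, p ≠ q → 1 ≤ dist p q) →
        (nearPairs P (⋃ l : Fin k, Set.Icc (t l) (t l + 1)) : ℝ) ≤ (n : ℝ)^2 / 4 + C * n := by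
  classical
  obtain ⟨hδ0, hδ1⟩ := hδ
  refine ⟨0, 27 * Btot k δ / 4 + 1, by linarith [Btot_nonneg k δ hδ0], ?_⟩
  intro n hn t ht0 htmono htsep P hP hsep
  have hB0 := Btot_nonneg k δ hδ0
  set S : Set ℝ := ⋃ l : Fin k, Set.Icc (t l) (t l + 1) with hS
  have ht1 : ∀ i : Fin k, 1 ≤ t i := by
    intro i
    have h0 : (⟨0, by omega⟩ : Fin k) ≤ i := by
      rw [Fin.le_def]
      simp
    exact le_trans ht0 (htmono.monotone h0)
  set A : Finset (Pt × Pt) := P.offDiag.filter (fun z => dist z.1 z.2 ∈ S) with hA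
  have hAmem : ∀ z : Pt × Pt, z ∈ A ↔ (z.1 ∈ P ∧ z.2 ∈ P ∧ z.1 ≠ z.2 ∧ dist z.1 z.2 ∈ S) := by
    intro z; rw [hA, Finset.mem_filter, Finset.mem_offDiag]; tauto
  have hAsym : ∀ x y : Pt, (x, y) ∈ A → (y, x) ∈ A := by
    intro x y h
    rw [hAmem] at h ⊢
    obtain ⟨h1, h2, h3, h4⟩ := h
    exact ⟨h2, h1, h3.symm, by rwa [dist_comm]⟩
  set E : Finset (Sym2 Pt) := P.sym2.filter
      (fun e => ¬ e.IsDiag ∧ Sym2.lift ⟨fun p q => dist p q, fun _ _ => dist_comm _ _⟩ e ∈ S)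
      with hE
  have hnear : nearPairs P S = E.card := by
    unfold nearPairs
    have hset : {e : Sym2 Pt | ¬ e.IsDiag ∧ (∀ p ∈ e, p ∈ P) ∧
        Sym2.lift ⟨fun p q => dist p q, fun _ _ => dist_comm _ _⟩ e ∈ S} = ↑E := by
      ext e
      rw [Set.mem_setOf_eq, Finset.mem_coe, hE, Finset.mem_filter, Finset.mem_sym2_iff]
      tauto
    rw [hset, Set.ncard_coe_finset]
  -- every edge of A maps onto E, 2-to-1
  have hmapsE : ∀ z ∈ A, Sym2.mk z.1 z.2 ∈ E := by
    rintro ⟨x, y⟩ hz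
    rw [hAmem] at hz
    obtain ⟨h1, h2, h3, h4⟩ := hz
    rw [hE, Finset.mem_filter]
    refine ⟨Finset.mem_sym2_iff.mpr ?_, ?_, ?_⟩
    · intro p hp
      rcases Sym2.mem_iff.mp hp with h | h
      · rw [h]; exact h1
      · rw [h]; exact h2
    · intro hdiag
      exact h3 (Sym2.mk_isDiag_iff.mp hdiag)
    · simpa using h4
  have hA2E : A.card = ∑ e ∈ E, (A.filter (fun z => Sym2.mk z.1 z.2 = e)).card :=
    Finset.card_eq_sum_card_fiberwise hmapsE
  have hfib2 : ∀ e ∈ E, 2 ≤ (A.filter (fun z => Sym2.mk z.1 z.2 = e)).card := by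
    intro e he
    induction e using Sym2.inductionOn with
    | hf x y =>
      rw [hE, Finset.mem_filter] at he
      obtain ⟨hmem, hdiag, hlift⟩ := he
      have hxy : x ≠ y := fun h => hdiag (Sym2.mk_isDiag_iff.mpr h)
      have hxP : x ∈ P := Finset.mem_sym2_iff.mp hmem x (Sym2.mem_iff.mpr (Or.inl rfl))
      have hyP : y ∈ P := Finset.mem_sym2_iff.mp hmem y (Sym2.mem_iff.mpr (Or.inr rfl))
      have hdS : dist x y ∈ S := by simpa using hlift
      have h1 : (x, y) ∈ A.filter (fun z => Sym2.mk z.1 z.2 = s(x,y)) :=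
        Finset.mem_filter.mpr ⟨(hAmem _).mpr ⟨hxP, hyP, hxy, hdS⟩, rfl⟩
      have h2 : (y, x) ∈ A.filter (fun z => Sym2.mk z.1 z.2 = s(x,y)) :=
        Finset.mem_filter.mpr ⟨(hAmem _).mpr ⟨hyP, hxP, hxy.symm, by rwa [dist_comm]⟩,
          Sym2.eq_swap⟩
      have hne : ((x,y) : Pt × Pt) ≠ (y,x) := fun h => hxy (congrArg Prod.fst h)
      exact Finset.one_lt_card.mpr ⟨(x,y), h1, (y,x), h2, hne⟩
  have h2E : 2 * E.card ≤ A.card := by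
    rw [hA2E]
    calc 2 * E.card = ∑ _e ∈ E, 2 := by rw [Finset.sum_const, smul_eq_mul, mul_comm]
      _ ≤ ∑ e ∈ E, (A.filter (fun z => Sym2.mk z.1 z.2 = e)).card := Finset.sum_le_sum hfib2
  -- degrees
  set deg : Pt → ℕ := fun p => (P.filter (fun v => (p, v) ∈ A)).card with hdeg
  have hfstA : ∀ z ∈ A, z.1 ∈ P := fun z hz => ((hAmem z).mp hz).1
  have hsndA : ∀ z ∈ A, z.2 ∈ P := fun z hz => ((hAmem z).mp hz).2.1
  have hfiber1 : ∀ p ∈ P, (A.filter (fun z => z.1 = p)).card = deg p := by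
    intro p hp
    apply Finset.card_bij (fun z _ => z.2)
    · intro z hz
      obtain ⟨hzA, hz1⟩ := Finset.mem_filter.mp hz
      refine Finset.mem_filter.mpr ⟨hsndA z hzA, ?_⟩
      rw [← hz1]
      rwa [Prod.mk.eta]
    · intro z hz z' hz' hzz
      obtain ⟨_, e1⟩ := Finset.mem_filter.mp hz
      obtain ⟨_, e1'⟩ := Finset.mem_filter.mp hz'
      exact Prod.ext (e1.trans e1'.symm) hzz
    · intro v hv
      obtain ⟨hvP, hvA⟩ := Finset.mem_filter.mp hv
      exact ⟨(p, v), Finset.mem_filter.mpr ⟨hvA, rfl⟩, rfl⟩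
  have hfiber2 : ∀ p ∈ P, (A.filter (fun z => z.2 = p)).card = deg p := by
    intro p hp
    apply Finset.card_bij (fun z _ => z.1)
    · intro z hz
      obtain ⟨hzA, hz2⟩ := Finset.mem_filter.mp hz
      refine Finset.mem_filter.mpr ⟨hfstA z hzA, ?_⟩
      apply hAsym
      rw [← hz2]
      rwa [Prod.mk.eta]
    · intro z hz z' hz' hzz
      obtain ⟨_, e1⟩ := Finset.mem_filter.mp hz
      obtain ⟨_, e1'⟩ := Finset.mem_filter.mp hz'
      exact Prod.ext hzz (e1.trans e1'.symm)
    · intro v hv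
      obtain ⟨hvP, hvA⟩ := Finset.mem_filter.mp hv
      exact ⟨(v, p), Finset.mem_filter.mpr ⟨hAsym _ _ hvA, rfl⟩, rfl⟩
  have hdegsum : ∑ p ∈ P, deg p = A.card := by
    rw [Finset.card_eq_sum_card_fiberwise hfstA]
    exact Finset.sum_congr rfl (fun p hp => (hfiber1 p hp).symm)
  have hsum1 : ∑ z ∈ A, (deg z.1 : ℝ) = ∑ p ∈ P, (deg p : ℝ)^2 := by
    rw [← Finset.sum_fiberwise_of_maps_to hfstA (fun z => (deg z.1 : ℝ))]
    apply Finset.sum_congr rfl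
    intro p hp
    have e : ∀ z ∈ A.filter (fun z => z.1 = p), (deg z.1 : ℝ) = (deg p : ℝ) := by
      intro z hz; rw [(Finset.mem_filter.mp hz).2]
    rw [Finset.sum_congr rfl e, Finset.sum_const, hfiber1 p hp, nsmul_eq_mul, sq]
  have hsum2 : ∑ z ∈ A, (deg z.2 : ℝ) = ∑ p ∈ P, (deg p : ℝ)^2 := by
    rw [← Finset.sum_fiberwise_of_maps_to hsndA (fun z => (deg z.2 : ℝ))]
    apply Finset.sum_congr rfl
    intro p hp
    have e : ∀ z ∈ A.filter (fun z => z.2 = p), (deg z.2 : ℝ) = (deg p : ℝ) := by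
      intro z hz; rw [(Finset.mem_filter.mp hz).2]
    rw [Finset.sum_congr rfl e, Finset.sum_const, hfiber2 p hp, nsmul_eq_mul, sq]
  -- the Mantel-type local inequality
  set tau : Pt × Pt → ℕ := fun z => (P.filter (fun v => (z.1, v) ∈ A ∧ (z.2, v) ∈ A)).card
    with htau
  have hedge : ∀ z ∈ A, (deg z.1 : ℝ) + deg z.2 ≤ (n : ℝ) + tau z := by
    intro z hz
    have hunion : (P.filter (fun v => (z.1, v) ∈ A) ∪ P.filter (fun v => (z.2, v) ∈ A)).card
        ≤ n := by
      rw [← hP]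
      exact Finset.card_le_card
        (Finset.union_subset (Finset.filter_subset _ _) (Finset.filter_subset _ _))
    have hinter : P.filter (fun v => (z.1, v) ∈ A) ∩ P.filter (fun v => (z.2, v) ∈ A)
        = P.filter (fun v => (z.1, v) ∈ A ∧ (z.2, v) ∈ A) :=
      (Finset.filter_and _ _ _).symm
    have hcui := Finset.card_union_add_card_inter
      (P.filter (fun v => (z.1, v) ∈ A)) (P.filter (fun v => (z.2, v) ∈ A))
    rw [hinter] at hcui
    have hfin : deg z.1 + deg z.2 ≤ n + tau z := by
      have e1 : deg z.1 = (P.filter (fun v => (z.1, v) ∈ A)).card := rfl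
      have e2 : deg z.2 = (P.filter (fun v => (z.2, v) ∈ A)).card := rfl
      have e3 : tau z = (P.filter (fun v => (z.1, v) ∈ A ∧ (z.2, v) ∈ A)).card := rfl
      omega
    exact_mod_cast hfin
  have hCS : (∑ p ∈ P, (deg p:ℝ))^2 ≤ (n:ℝ) * ∑ p ∈ P, (deg p:ℝ)^2 := by
    have h := sq_sum_le_card_mul_sum_sq (s := P) (f := fun p => (deg p : ℝ))
    rwa [hP] at h
  -- ordered triangles
  set TriOrd := (A ×ˢ P).filter (fun y => (y.1.1, y.2) ∈ A ∧ (y.1.2, y.2) ∈ A) with hTri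
  have hTfst : ∀ y ∈ TriOrd, y.1 ∈ A := by
    intro y hy
    exact (Finset.mem_product.mp (Finset.mem_filter.mp hy).1).1
  have htricard : ∑ z ∈ A, tau z = TriOrd.card := by
    rw [Finset.card_eq_sum_card_fiberwise hTfst]
    apply Finset.sum_congr rfl
    intro z hz
    rw [htau]
    apply Finset.card_bij (fun v _ => ((z, v) : (Pt × Pt) × Pt)) ?_ ?_ ?_
    · intro v hv
      obtain ⟨hvP, hv1, hv2⟩ := Finset.mem_filter.mp hv
      refine Finset.mem_filter.mpr ⟨Finset.mem_filter.mpr ⟨?_, hv1, hv2⟩, rfl⟩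
      exact Finset.mem_product.mpr ⟨hz, hvP⟩
    · intro v hv v' hv' hvv
      exact (Prod.ext_iff.mp hvv).2
    · intro y hy
      obtain ⟨hyT, hy1⟩ := Finset.mem_filter.mp hy
      obtain ⟨hyP, hc1, hc2⟩ := Finset.mem_filter.mp hyT
      rw [hy1] at hc1 hc2
      refine ⟨y.2, ?_, ?_⟩
      · exact Finset.mem_filter.mpr ⟨(Finset.mem_product.mp hyP).2, hc1, hc2⟩
      · show (z, y.2) = y
        rw [← hy1]
  -- mapping triangles to good configurations
  set GoodT := (A ×ˢ P).filter (fun y => goodPt k δ t y.1.1 y.1.2 y.2) with hGoodT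
  have hclass : ∀ y ∈ TriOrd, ∃ g : (Pt × Pt) × Pt, g ∈ GoodT ∧
      ({g.1.1, g.1.2, g.2} : Finset Pt) = {y.1.1, y.1.2, y.2} := by
    intro y hy
    obtain ⟨hyP, hy1, hy2⟩ := Finset.mem_filter.mp hy
    have hyA : y.1 ∈ A := (Finset.mem_product.mp hyP).1
    have h11 := (hAmem y.1).mp hyA
    have h12 := (hAmem _).mp hy1
    have h13 := (hAmem _).mp hy2
    obtain ⟨u, w, v, hgood, huw, hdS, hset⟩ := classify k δ hδ0 hδ1 t ht1 htmono htsep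
      y.1.1 y.1.2 y.2 h11.2.2.1 h12.2.2.1 h13.2.2.1 h11.2.2.2 h12.2.2.2 h13.2.2.2
    refine ⟨((u, w), v), ?_, hset⟩
    have hmem3 : ∀ x : Pt, x ∈ ({y.1.1, y.1.2, y.2} : Finset Pt) → x ∈ P := by
      intro x hx
      rcases Finset.mem_insert.mp hx with h | h
      · rw [h]; exact h11.1
      rcases Finset.mem_insert.mp h with h' | h'
      · rw [h']; exact h11.2.1
      · rw [Finset.mem_singleton.mp h']; exact h13.2.1
    have huP : u ∈ P := hmem3 u (hset ▸ Finset.mem_insert_self _ _)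
    have hwP : w ∈ P := hmem3 w
      (hset ▸ Finset.mem_insert_of_mem (Finset.mem_insert_self _ _))
    have hvP : v ∈ P := hmem3 v
      (hset ▸ Finset.mem_insert_of_mem (Finset.mem_insert_of_mem (Finset.mem_singleton_self _)))
    rw [hGoodT, Finset.mem_filter]
    exact ⟨Finset.mem_product.mpr ⟨(hAmem _).mpr ⟨huP, hwP, huw, hdS⟩, hvP⟩, hgood⟩
  set Φ : (Pt × Pt) × Pt → (Pt × Pt) × Pt :=
    fun y => if h : y ∈ TriOrd then (hclass y h).choose else y with hΦ
  have hΦspec : ∀ y, ∀ h : y ∈ TriOrd, Φ y ∈ GoodT ∧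
      ({(Φ y).1.1, (Φ y).1.2, (Φ y).2} : Finset Pt) = {y.1.1, y.1.2, y.2} := by
    intro y h
    have : Φ y = (hclass y h).choose := by rw [hΦ]; simp only [dif_pos h]
    rw [this]
    exact (hclass y h).choose_spec
  have himage : TriOrd.image Φ ⊆ GoodT := by
    intro g hg
    obtain ⟨y, hy, rfl⟩ := Finset.mem_image.mp hg
    exact (hΦspec y hy).1
  have hfibermap : ∀ g ∈ TriOrd.image Φ, (TriOrd.filter (fun y => Φ y = g)).card ≤ 27 := by
    intro g hg
    set s₀ : Finset Pt := {g.1.1, g.1.2, g.2} with hs₀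
    have hsub : TriOrd.filter (fun y => Φ y = g) ⊆ (s₀ ×ˢ s₀) ×ˢ s₀ := by
      intro y hy
      obtain ⟨hyT, hyΦ⟩ := Finset.mem_filter.mp hy
      have hspec := (hΦspec y hyT).2
      rw [hyΦ] at hspec
      have e1 : y.1.1 ∈ s₀ := by rw [hs₀, hspec]; exact Finset.mem_insert_self _ _
      have e2 : y.1.2 ∈ s₀ := by
        rw [hs₀, hspec]; exact Finset.mem_insert_of_mem (Finset.mem_insert_self _ _)
      have e3 : y.2 ∈ s₀ := by
        rw [hs₀, hspec]
        exact Finset.mem_insert_of_mem (Finset.mem_insert_of_mem (Finset.mem_singleton_self _))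
      exact Finset.mem_product.mpr ⟨Finset.mem_product.mpr ⟨e1, e2⟩, e3⟩
    have hs₀card : s₀.card ≤ 3 := by
      rw [hs₀]
      refine le_trans (Finset.card_insert_le _ _) ?_
      have h2 := Finset.card_insert_le g.1.2 ({g.2} : Finset Pt)
      rw [Finset.card_singleton] at h2
      omega
    calc (TriOrd.filter (fun y => Φ y = g)).card ≤ ((s₀ ×ˢ s₀) ×ˢ s₀).card :=
          Finset.card_le_card hsub
      _ = s₀.card * s₀.card * s₀.card := by rw [Finset.card_product, Finset.card_product]
      _ ≤ 27 := by
          calc s₀.card * s₀.card * s₀.card ≤ 3 * 3 * 3 :=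
            Nat.mul_le_mul (Nat.mul_le_mul hs₀card hs₀card) hs₀card
            _ = 27 := rfl
  have hTG : TriOrd.card ≤ 27 * GoodT.card := by
    calc TriOrd.card ≤ 27 * (TriOrd.image Φ).card :=
          Finset.card_le_mul_card_image TriOrd 27 hfibermap
      _ ≤ 27 * GoodT.card := Nat.mul_le_mul_left _ (Finset.card_le_card himage)
  -- summing the good configurations over edges
  have hGfst : ∀ y ∈ GoodT, y.1 ∈ A :=
    fun y hy => (Finset.mem_product.mp (Finset.mem_filter.mp hy).1).1
  have hGsum : GoodT.card = ∑ z ∈ A, (P.filter (fun v => goodPt k δ t z.1 z.2 v)).card := by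
    rw [Finset.card_eq_sum_card_fiberwise hGfst]
    apply Finset.sum_congr rfl
    intro z hz
    apply Finset.card_bij (fun y (_ : y ∈ GoodT.filter (fun y => y.1 = z)) => y.2)
    · intro y hy
      obtain ⟨hyG, hy1⟩ := Finset.mem_filter.mp hy
      obtain ⟨hyP, hygood⟩ := Finset.mem_filter.mp hyG
      refine Finset.mem_filter.mpr ⟨(Finset.mem_product.mp hyP).2, ?_⟩
      rw [← hy1]; exact hygood
    · intro y hy y' hy' hyy
      obtain ⟨_, e1⟩ := Finset.mem_filter.mp hy
      obtain ⟨_, e1'⟩ := Finset.mem_filter.mp hy'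
      exact Prod.ext (e1.trans e1'.symm) hyy
    · intro v hv
      obtain ⟨hvP, hvgood⟩ := Finset.mem_filter.mp hv
      refine ⟨(z, v), Finset.mem_filter.mpr ⟨Finset.mem_filter.mpr ⟨?_, hvgood⟩, rfl⟩, rfl⟩
      exact Finset.mem_product.mpr ⟨hz, hvP⟩
  have hperedge : ∀ z ∈ A, ((P.filter (fun v => goodPt k δ t z.1 z.2 v)).card : ℝ)
      ≤ Btot k δ :=
    fun z _ => good_count k δ hδ0 hδ1.le t ht1 P hsep z.1 z.2
  -- assembly over the reals
  set m : ℝ := (A.card : ℝ) with hm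
  have hm0 : (0:ℝ) ≤ m := by rw [hm]; exact Nat.cast_nonneg _
  have hG : (GoodT.card : ℝ) ≤ Btot k δ * m := by
    calc (GoodT.card : ℝ)
        = ∑ z ∈ A, ((P.filter (fun v => goodPt k δ t z.1 z.2 v)).card : ℝ) := by
          rw [hGsum]; push_cast; rfl
      _ ≤ ∑ _z ∈ A, Btot k δ := Finset.sum_le_sum hperedge
      _ = Btot k δ * m := by rw [Finset.sum_const, nsmul_eq_mul, hm]; ring
  have hT : (TriOrd.card : ℝ) ≤ 27 * Btot k δ * m := by
    calc (TriOrd.card : ℝ) ≤ 27 * (GoodT.card : ℝ) := by exact_mod_cast hTG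
      _ ≤ 27 * (Btot k δ * m) := by
          apply mul_le_mul_of_nonneg_left hG (by norm_num)
      _ = 27 * Btot k δ * m := by ring
  have hDsum : 2 * ∑ p ∈ P, (deg p:ℝ)^2 ≤ (n:ℝ) * m + (TriOrd.card : ℝ) := by
    have e1 : ∑ z ∈ A, ((deg z.1 : ℝ) + (deg z.2 : ℝ)) = 2 * ∑ p ∈ P, (deg p:ℝ)^2 := by
      rw [Finset.sum_add_distrib, hsum1, hsum2]; ring
    have e2 : ∑ z ∈ A, ((deg z.1 : ℝ) + (deg z.2 : ℝ)) ≤ ∑ z ∈ A, ((n:ℝ) + (tau z : ℝ)) :=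
      Finset.sum_le_sum hedge
    have e3 : ∑ z ∈ A, ((n:ℝ) + (tau z:ℝ)) = (n:ℝ)*m + (TriOrd.card : ℝ) := by
      rw [Finset.sum_add_distrib, Finset.sum_const, nsmul_eq_mul]
      congr 1
      · rw [hm]; ring
      · rw [← htricard]; push_cast; rfl
    linarith only [e1, e2, e3]
  have hmdeg : m = ∑ p ∈ P, (deg p : ℝ) := by rw [hm, ← hdegsum]; push_cast; rfl
  have hkey : 2 * m^2 ≤ (n:ℝ)^2 * m + (n:ℝ) * (27 * Btot k δ * m) := by
    have c1 : m^2 ≤ (n:ℝ) * ∑ p ∈ P, (deg p:ℝ)^2 := by rw [hmdeg]; exact hCS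
    have c2 : (n:ℝ) * (2 * ∑ p ∈ P, (deg p:ℝ)^2) ≤ (n:ℝ) * ((n:ℝ)*m + (TriOrd.card:ℝ)) :=
      mul_le_mul_of_nonneg_left hDsum (Nat.cast_nonneg _)
    have c3 : (n:ℝ) * ((n:ℝ)*m + (TriOrd.card:ℝ)) ≤ (n:ℝ)*((n:ℝ)*m + 27*Btot k δ*m) :=
      mul_le_mul_of_nonneg_left (by linarith only [hT]) (Nat.cast_nonneg _)
    nlinarith [c1, c2, c3]
  rw [hnear]
  have hE2 : 2 * (E.card : ℝ) ≤ m := by rw [hm]; exact_mod_cast h2E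
  have hn0 : (0:ℝ) ≤ (n:ℝ) := Nat.cast_nonneg n
  rcases eq_or_lt_of_le hm0 with hm' | hm'
  · have hE0 : (E.card : ℝ) ≤ 0 := by linarith only [hE2, hm']
    have : (E.card : ℝ) = 0 := le_antisymm hE0 (Nat.cast_nonneg _)
    rw [this]
    nlinarith [mul_nonneg hB0 hn0, sq_nonneg (n:ℝ)]
  · have hdiv : 2 * m ≤ (n:ℝ)^2 + (n:ℝ) * (27 * Btot k δ) := by
      have h' : (2*m)*m ≤ ((n:ℝ)^2 + (n:ℝ)*(27*Btot k δ))*m := by nlinarith [hkey]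
      exact le_of_mul_le_mul_right h' hm'
    calc (E.card:ℝ) ≤ m/2 := by linarith only [hE2]
      _ ≤ (n:ℝ)^2/4 + (27*Btot k δ/4) * (n:ℝ) := by nlinarith [hdiv]
      _ ≤ (n:ℝ)^2/4 + (27*Btot k δ/4 + 1) * (n:ℝ) := by nlinarith [hn0]
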